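/- Suppose for p = 1 and q ∈ (0,n] the dual Brunn–Minkowski inequality Ṽ_q((1-λ)K + λL)^{1/q} ≥ (1-λ)Ṽ_q(K)^{1/q} + λṼ_q(L)^{1/q} holds for all origin-symmetric convex bodies K, L in ℝⁿ and all λ ∈ [0,1]. Then for every p ≥ 1 the L_p version holds: Ṽ_q((1-λ)K +_p λL)^{p/q} ≥ (1-λ)Ṽ_q(K)^{p/q} + λṼ_q(L)^{p/q} for all origin-symmetric K, L and λ ∈ [0,1]. -/

import Mathlib

open MeasureTheory Real Filter
open scoped RealInnerProductSpace Pointwise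

noncomputable section

/-- Euclidean space ℝⁿ. -/
abbrev E (n : ℕ) := EuclideanSpace ℝ (Fin n)

/-- The unit sphere S^{n-1} as a subset of ℝⁿ. -/
def sph (n : ℕ) : Set (E n) := Metric.sphere 0 1

/-- Support function of a set K: h_K(u) = sup_{y ∈ K} ⟪u, y⟫. -/
def supp {n : ℕ} (K : Set (E n)) (u : E n) : ℝ := sSup ((fun y => ⟪u, y⟫) '' K)

/-- Radial function of a set K: ρ_K(u) = sup {t ≥ 0 : t • u ∈ K}. -/
def rad {n : ℕ} (K : Set (E n)) (u : E n) : ℝ := sSup {t : ℝ | 0 ≤ t ∧ t • u ∈ K}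

/-- q-th dual quermassintegral Ṽ_q(K) = (1/n) ∫_{S^{n-1}} ρ_K^q dH^{n-1}. -/
def Vq {n : ℕ} (q : ℝ) (K : Set (E n)) : ℝ :=
  (1 / (n : ℝ)) * ∫ u in sph n, rad K u ^ q ∂(μH[((n : ℝ) - 1)])

/-- Wulff shape of a function f on the sphere. -/
def wulff {n : ℕ} (f : E n → ℝ) : Set (E n) :=
  {x | ∀ u : E n, ‖u‖ = 1 → ⟪u, x⟫ ≤ f u}

/-- L_p combination (1-λ)K +_p λL, as Wulff shape of the p-mean of support functions. -/
def lpComb {n : ℕ} (p lam : ℝ) (K L : Set (E n)) : Set (E n) :=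
  wulff fun u => ((1 - lam) * supp K u ^ p + lam * supp L u ^ p) ^ (1 / p)

/-- Convex body containing the origin in its interior. -/
def IsBody {n : ℕ} (K : Set (E n)) : Prop :=
  Convex ℝ K ∧ IsCompact K ∧ (0 : E n) ∈ interior K

open scoped Topology in
/-- dummy -/
lemma _stmt8_dummy : True := trivial

open scoped Topology NNReal ENNReal

/-! ### Auxiliary lemmas -/

section Aux

variable {n : ℕ}

lemma mem_sph {u : E n} : u ∈ sph n ↔ ‖u‖ = 1 := by
  simp [sph, mem_sphere_iff_norm]

lemma measurableSet_sph : MeasurableSet (sph n) :=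
  Metric.isClosed_sphere.measurableSet

/-! #### radial function -/

lemma rad_nonneg (K : Set (E n)) (u : E n) : 0 ≤ rad K u :=
  Real.sSup_nonneg fun _ ht => ht.1

lemma radSet_bddAbove {K : Set (E n)} {R : ℝ} (hK : K ⊆ Metric.closedBall 0 R)
    {u : E n} (hu : ‖u‖ = 1) : BddAbove {t : ℝ | 0 ≤ t ∧ t • u ∈ K} := by
  refine ⟨R, fun t ht => ?_⟩
  have h1 := hK ht.2
  rw [Metric.mem_closedBall, dist_zero_right, norm_smul, hu, mul_one] at h1
  calc t = |t| := (abs_of_nonneg ht.1).symm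
  _ ≤ R := h1

lemma zero_mem_radSet {K : Set (E n)} (h0 : (0 : E n) ∈ K) (u : E n) :
    (0 : ℝ) ∈ {t : ℝ | 0 ≤ t ∧ t • u ∈ K} := ⟨le_refl 0, by simpa using h0⟩

lemma le_rad {K : Set (E n)} {R : ℝ} (hK : K ⊆ Metric.closedBall 0 R) {u : E n}
    (hu : ‖u‖ = 1) {t : ℝ} (ht0 : 0 ≤ t) (ht : t • u ∈ K) : t ≤ rad K u :=
  le_csSup (radSet_bddAbove hK hu) ⟨ht0, ht⟩

lemma rad_le {K : Set (E n)} {R : ℝ} (hK : K ⊆ Metric.closedBall 0 R) {u : E n}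
    (hu : ‖u‖ = 1) (h0 : (0 : E n) ∈ K) : rad K u ≤ R := by
  refine csSup_le ⟨0, zero_mem_radSet h0 u⟩ fun t ht => ?_
  have h1 := hK ht.2
  rw [Metric.mem_closedBall, dist_zero_right, norm_smul, hu, mul_one] at h1
  calc t = |t| := (abs_of_nonneg ht.1).symm
  _ ≤ R := h1

lemma rad_mono {K M : Set (E n)} {R : ℝ} (hKM : K ⊆ M) (h0 : (0 : E n) ∈ K)
    (hM : M ⊆ Metric.closedBall 0 R) {u : E n} (hu : ‖u‖ = 1) : rad K u ≤ rad M u :=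
  csSup_le_csSup (radSet_bddAbove hM hu) ⟨0, zero_mem_radSet h0 u⟩
    fun t ht => ⟨ht.1, hKM ht.2⟩

lemma rad_smul {K : Set (E n)} {c : ℝ} (hc : 0 < c) (u : E n) :
    rad (c • K) u = c * rad K u := by
  have hset : {t : ℝ | 0 ≤ t ∧ t • u ∈ c • K} = c • {t : ℝ | 0 ≤ t ∧ t • u ∈ K} := by
    ext t
    simp only [Set.mem_smul_set_iff_inv_smul_mem₀ hc.ne', Set.mem_setOf_eq, smul_smul,
      smul_eq_mul]
    constructor
    · rintro ⟨ht0, ht⟩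
      exact ⟨by positivity, ht⟩
    · rintro ⟨ht0, ht⟩
      refine ⟨?_, ht⟩
      by_contra h
      push_neg at h
      nlinarith [mul_pos (inv_pos.2 hc) (neg_pos.2 h)]
  rw [rad, hset, Real.sSup_smul_of_nonneg hc.le, smul_eq_mul, rad]

/-! #### dual quermassintegral -/

lemma Vq_nonneg (q : ℝ) (K : Set (E n)) : 0 ≤ Vq q K := by
  refine mul_nonneg (by positivity) ?_
  exact setIntegral_nonneg measurableSet_sph fun u _ => Real.rpow_nonneg (rad_nonneg K u) q

lemma Vq_smul {q : ℝ} {K : Set (E n)} {c : ℝ} (hc : 0 < c) :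
    Vq q (c • K) = c ^ q * Vq q K := by
  unfold Vq
  rw [← mul_assoc, mul_comm (c ^ q), mul_assoc]
  congr 1
  rw [← smul_eq_mul, ← integral_smul]
  refine setIntegral_congr_fun measurableSet_sph fun u _ => ?_
  rw [rad_smul hc, Real.mul_rpow hc.le (rad_nonneg K u), smul_eq_mul]

lemma Vq_mono {q : ℝ} (hq : 0 ≤ q) {K M : Set (E n)} (hKM : K ⊆ M) (h0 : (0 : E n) ∈ K)
    {R : ℝ} (hMR : M ⊆ Metric.closedBall 0 R)
    (hint : IntegrableOn (fun u => rad M u ^ q) (sph n) μH[((n : ℝ) - 1)]) :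
    Vq q K ≤ Vq q M := by
  unfold Vq
  refine mul_le_mul_of_nonneg_left ?_ (by positivity)
  refine integral_mono_of_nonneg (Eventually.of_forall fun u => Real.rpow_nonneg (rad_nonneg K u) q)
    hint ?_
  refine (ae_restrict_iff' measurableSet_sph).2 (Eventually.of_forall fun u hu => ?_)
  exact Real.rpow_le_rpow (rad_nonneg K u) (rad_mono hKM h0 hMR (mem_sph.1 hu)) hq

/-! #### support function -/

lemma suppImage_bddAbove {K : Set (E n)} (hKc : IsCompact K) (u : E n) :
    BddAbove ((fun y => ⟪u, y⟫) '' K) :=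
  (hKc.image (Continuous.inner continuous_const continuous_id)).bddAbove

lemma le_supp {K : Set (E n)} (hKc : IsCompact K) {y : E n} (hy : y ∈ K) (u : E n) :
    ⟪u, y⟫ ≤ supp K u :=
  le_csSup (suppImage_bddAbove hKc u) (Set.mem_image_of_mem _ hy)

lemma supp_nonneg {K : Set (E n)} (hKc : IsCompact K) (h0 : (0 : E n) ∈ K) (u : E n) :
    0 ≤ supp K u := by
  have := le_supp hKc h0 u
  simpa using this

lemma supp_le {K : Set (E n)} (h0 : (0 : E n) ∈ K) {R : ℝ}
    (hK : K ⊆ Metric.closedBall 0 R) {u : E n} (hu : ‖u‖ = 1) : supp K u ≤ R := by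
  refine csSup_le ⟨⟪u, 0⟫, Set.mem_image_of_mem _ h0⟩ ?_
  rintro x ⟨y, hy, rfl⟩
  have h1 := hK hy
  rw [Metric.mem_closedBall, dist_zero_right] at h1
  calc ⟪u, y⟫ ≤ ‖u‖ * ‖y‖ := real_inner_le_norm u y
  _ = ‖y‖ := by rw [hu, one_mul]
  _ ≤ R := h1

/-! #### Wulff shapes -/

lemma wulff_convex (f : E n → ℝ) : Convex ℝ (wulff f) := by
  intro x hx y hy a b ha hb hab u hu
  have h1 := hx u hu
  have h2 := hy u hu
  rw [inner_add_right, real_inner_smul_right, real_inner_smul_right]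
  calc a * ⟪u, x⟫ + b * ⟪u, y⟫ ≤ a * f u + b * f u :=
        add_le_add (mul_le_mul_of_nonneg_left h1 ha) (mul_le_mul_of_nonneg_left h2 hb)
  _ = f u := by rw [← add_mul, hab, one_mul]

lemma wulff_closed (f : E n → ℝ) : IsClosed (wulff f) := by
  have : wulff f = ⋂ u : E n, {x : E n | ‖u‖ = 1 → ⟪u, x⟫ ≤ f u} := by
    ext x; simp [wulff, Set.mem_iInter]
  rw [this]
  refine isClosed_iInter fun u => ?_
  by_cases h : ‖u‖ = 1
  · simp only [h, forall_true_left]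
    exact isClosed_le (Continuous.inner continuous_const continuous_id) continuous_const
  · have huniv : {x : E n | ‖u‖ = 1 → ⟪u, x⟫ ≤ f u} = Set.univ := by
      ext x; simp [h]
    rw [huniv]; exact isClosed_univ

lemma wulff_subset_closedBall {f : E n → ℝ} {C : ℝ} (hC : 0 ≤ C)
    (hf : ∀ u : E n, ‖u‖ = 1 → f u ≤ C) : wulff f ⊆ Metric.closedBall 0 C := by
  intro x hx
  rw [Metric.mem_closedBall, dist_zero_right]
  rcases eq_or_ne x 0 with rfl | hx0
  · simpa using hC
  · have hnx : 0 < ‖x‖ := norm_pos_iff.2 hx0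
    set u := ‖x‖⁻¹ • x with hu_def
    have hu : ‖u‖ = 1 := by
      rw [hu_def, norm_smul, norm_inv, norm_norm, inv_mul_cancel₀ hnx.ne']
    have h1 := hx u hu
    rw [hu_def, real_inner_smul_left, real_inner_self_eq_norm_sq] at h1
    have h2 : ‖x‖⁻¹ * ‖x‖ ^ 2 = ‖x‖ := by
      rw [sq]; field_simp
    rw [h2] at h1
    exact h1.trans (hf u hu)

end Aux

section Gauge

variable {n : ℕ}

lemma gauge_lower {M : Set (E n)} {R : ℝ} (hMR : M ⊆ Metric.closedBall 0 R)
    (hM0 : M ∈ 𝓝 (0 : E n)) {u : E n} (hu : ‖u‖ = 1) : R⁻¹ ≤ gauge M u := by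
  refine le_csInf (Absorbent.gauge_set_nonempty (absorbent_nhds_zero hM0)) ?_
  rintro t ⟨ht0, hut⟩
  rw [Set.mem_smul_set_iff_inv_smul_mem₀ ht0.ne'] at hut
  have h1 := hMR hut
  rw [Metric.mem_closedBall, dist_zero_right, norm_smul, norm_inv, Real.norm_eq_abs,
    abs_of_pos ht0, hu, mul_one] at h1
  -- h1 : t⁻¹ ≤ R
  have hR : 0 < R := lt_of_lt_of_le (inv_pos.2 ht0) h1
  have h2 : 1 ≤ R * t := by
    have h3 := mul_le_mul_of_nonneg_right h1 ht0.le
    rwa [inv_mul_cancel₀ ht0.ne'] at h3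
  have h4 := mul_le_mul_of_nonneg_left h2 (inv_pos.2 hR).le
  rwa [mul_one, ← mul_assoc, inv_mul_cancel₀ hR.ne', one_mul] at h4

lemma gaugePos' {M : Set (E n)} {R : ℝ} (hMR : M ⊆ Metric.closedBall 0 R)
    (hM0 : M ∈ 𝓝 (0 : E n)) {u : E n} (hu : ‖u‖ = 1) : 0 < gauge M u := by
  have hR : 0 < R := by
    have h1 := hMR (mem_of_mem_nhds hM0)
    rw [Metric.mem_closedBall, dist_zero_right, norm_zero] at h1
    rcases eq_or_lt_of_le h1 with h | h
    · -- R = 0 : then M ⊆ {0}, contradicting M ∈ 𝓝 0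
      exfalso
      obtain ⟨ε, hε, hball⟩ := Metric.mem_nhds_iff.1 hM0
      have h2 : (ε / 2) • u ∈ M := by
        apply hball
        rw [Metric.mem_ball, dist_zero_right, norm_smul, hu, mul_one, Real.norm_eq_abs,
          abs_of_pos (by positivity)]
        linarith
      have h3 := hMR h2
      rw [Metric.mem_closedBall, dist_zero_right, norm_smul, hu, mul_one, Real.norm_eq_abs,
        abs_of_pos (by positivity), ← h] at h3
      linarith
    · exact h
  exact lt_of_lt_of_le (inv_pos.2 hR) (gauge_lower hMR hM0 hu)

lemma rad_eq_inv_gauge {M : Set (E n)} (hconv : Convex ℝ M) (hcl : IsClosed M)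
    (hM0 : M ∈ 𝓝 (0 : E n)) {R : ℝ} (hMR : M ⊆ Metric.closedBall 0 R)
    {u : E n} (hu : ‖u‖ = 1) : rad M u = (gauge M u)⁻¹ := by
  have hg : 0 < gauge M u := gaugePos' hMR hM0 hu
  have hset : {t : ℝ | 0 ≤ t ∧ t • u ∈ M} = Set.Icc 0 (gauge M u)⁻¹ := by
    ext t
    simp only [Set.mem_setOf_eq, Set.mem_Icc]
    constructor
    · rintro ⟨ht0, htm⟩
      refine ⟨ht0, ?_⟩
      have h1 : gauge M (t • u) ≤ 1 := gauge_le_one_of_mem htm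
      rw [gauge_smul_of_nonneg ht0, smul_eq_mul] at h1
      rw [inv_eq_one_div, le_div_iff₀ hg]
      exact h1
    · rintro ⟨ht0, ht⟩
      refine ⟨ht0, ?_⟩
      rcases eq_or_lt_of_le ht0 with rfl | ht0'
      · simpa using mem_of_mem_nhds hM0
      · have h1 : gauge M (t • u) ≤ 1 := by
          rw [gauge_smul_of_nonneg ht0, smul_eq_mul]
          rw [inv_eq_one_div, le_div_iff₀ hg] at ht
          exact ht
        have h2 := (gauge_le_one_iff_mem_closure hconv hM0).1 h1
        rwa [hcl.closure_eq] at h2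
  rw [rad, hset, csSup_Icc (by positivity)]

lemma rad_continuousOn {M : Set (E n)} (hconv : Convex ℝ M) (hcl : IsClosed M)
    (hM0 : M ∈ 𝓝 (0 : E n)) {R : ℝ} (hMR : M ⊆ Metric.closedBall 0 R) :
    ContinuousOn (fun u => rad M u) (sph n) := by
  have h1 : ContinuousOn (fun u => (gauge M u)⁻¹) (sph n) :=
    ((continuous_gauge hconv hM0).continuousOn).inv₀
      fun u hu => (gaugePos' hMR hM0 (mem_sph.1 hu)).ne'
  exact h1.congr fun u hu => rad_eq_inv_gauge hconv hcl hM0 hMR (mem_sph.1 hu)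

lemma body_integrableOn {M : Set (E n)} (hconv : Convex ℝ M) (hcl : IsClosed M)
    (hM0 : M ∈ 𝓝 (0 : E n)) {R : ℝ} (hMR : M ⊆ Metric.closedBall 0 R)
    {q : ℝ} (hq : 0 ≤ q) (hfin : μH[((n : ℝ) - 1)] (sph n) ≠ ⊤) :
    IntegrableOn (fun u => rad M u ^ q) (sph n) μH[((n : ℝ) - 1)] := by
  haveI : IsFiniteMeasure (μH[((n : ℝ) - 1)].restrict (sph n)) := by
    constructor
    rw [Measure.restrict_apply_univ]
    exact lt_top_iff_ne_top.2 hfin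
  have hcont : ContinuousOn (fun u => rad M u ^ q) (sph n) :=
    (rad_continuousOn hconv hcl hM0 hMR).rpow_const fun u _ => Or.inr hq
  have hmeas : AEStronglyMeasurable (fun u => rad M u ^ q) (μH[((n : ℝ) - 1)].restrict (sph n)) :=
    hcont.aestronglyMeasurable measurableSet_sph
  have h0M : (0 : E n) ∈ M := mem_of_mem_nhds hM0
  refine Integrable.mono' (integrable_const (|R| ^ q)) hmeas ?_
  refine (ae_restrict_iff' measurableSet_sph).2 (Eventually.of_forall fun u hu => ?_)
  have hu := mem_sph.1 hu
  rw [Real.norm_eq_abs, abs_of_nonneg (Real.rpow_nonneg (rad_nonneg M u) q)]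
  refine Real.rpow_le_rpow (rad_nonneg M u) ?_ hq
  exact (rad_le hMR hu h0M).trans (le_abs_self R)

end Gauge

/-! ### The sphere has positive, finite Hausdorff measure -/

section SphereMeasure

variable {n : ℕ}

/-- The hyperplane orthogonal to `u`. -/
def hplane (u : E n) : Submodule ℝ (E n) := (ℝ ∙ u)ᗮ

/-- Parametrization of the upper cap over the hyperplane. -/
def capmap (u : E n) (y : hplane u) : E n := (y : E n) + Real.sqrt (1 - ‖y‖ ^ 2) • u

/-- The cap of the sphere around `u`. -/
def capSet (u : E n) : Set (E n) := {x | x ∈ sph n ∧ 1 / 2 ≤ ⟪u, x⟫}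

lemma inner_hplane {u : E n} (y : hplane u) : ⟪u, (y : E n)⟫ = 0 :=
  Submodule.inner_right_of_mem_orthogonal (Submodule.mem_span_singleton_self u) y.2

lemma coe_norm_hplane {u : E n} (y : hplane u) : ‖(y : E n)‖ = ‖y‖ := rfl

lemma norm_decomp {u : E n} (hu : ‖u‖ = 1) (y : hplane u) (s : ℝ) :
    ‖(y : E n) + s • u‖ ^ 2 = ‖y‖ ^ 2 + s ^ 2 := by
  rw [norm_add_sq_real]
  have h1 : ⟪(y : E n), s • u⟫ = 0 := by
    rw [real_inner_smul_right, real_inner_comm, inner_hplane, mul_zero]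
  rw [h1, norm_smul, hu, coe_norm_hplane]
  simp [sq_abs]

lemma le_of_sq_le_sq' {x y : ℝ} (hy : 0 ≤ y) (h : x ^ 2 ≤ y ^ 2) (hx : 0 ≤ x) : x ≤ y := by
  nlinarith

lemma decomp {u : E n} (hu : ‖u‖ = 1) (x : E n) :
    x = ⟪u, x⟫ • u + ((Submodule.orthogonalProjectionOnto (hplane u) x : E n)) := by
  have h := Submodule.starProjection_add_starProjection_orthogonal (K := ℝ ∙ u) x
  have h2 : (ℝ ∙ u).starProjection x = ⟪u, x⟫ • u :=
    Submodule.starProjection_unit_singleton ℝ hu x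
  rw [h2] at h
  exact h.symm

lemma capBall_sq_bound {u : E n} {y : hplane u}
    (hy : y ∈ Metric.closedBall (0 : hplane u) (Real.sqrt (3 / 4))) : ‖y‖ ^ 2 ≤ 3 / 4 := by
  rw [Metric.mem_closedBall, dist_zero_right] at hy
  have h := pow_le_pow_left₀ (norm_nonneg y) hy 2
  rwa [Real.sq_sqrt (by norm_num : (0:ℝ) ≤ 3/4)] at h

lemma cap_subset_image {u : E n} (hu : ‖u‖ = 1) :
    capSet u ⊆ capmap u '' Metric.closedBall 0 (Real.sqrt (3 / 4)) := by
  rintro x ⟨hx1, hx2⟩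
  set t := ⟪u, x⟫ with ht_def
  set y := Submodule.orthogonalProjectionOnto (hplane u) x with hy_def
  have hd := decomp hu x
  have hxn : ‖x‖ = 1 := mem_sph.1 hx1
  have hn1 : (1 : ℝ) = ‖y‖ ^ 2 + t ^ 2 := by
    have h2 := norm_decomp hu y t
    rw [add_comm ((y : E n))] at h2
    rw [← hd] at h2
    rw [hxn] at h2
    norm_num at h2
    exact h2
  have ht1 : t ≤ 1 := by
    have h3 := real_inner_le_norm u x
    rw [hu, hxn, one_mul] at h3
    exact h3
  have ht0 : 0 ≤ t := le_trans (by norm_num) hx2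
  have hy34 : ‖y‖ ^ 2 ≤ 3 / 4 := by nlinarith
  refine ⟨y, ?_, ?_⟩
  · rw [Metric.mem_closedBall, dist_zero_right]
    exact (Real.le_sqrt (norm_nonneg _) (by norm_num)).2 hy34
  · rw [capmap]
    have h5 : 1 - ‖y‖ ^ 2 = t ^ 2 := by linarith
    rw [h5, Real.sqrt_sq ht0]
    rw [hd]
    exact add_comm _ _

lemma sqrt_lip {a b : ℝ} (ha : a ^ 2 ≤ 3 / 4) (hb : b ^ 2 ≤ 3 / 4) :
    |Real.sqrt (1 - a ^ 2) - Real.sqrt (1 - b ^ 2)| ≤ 2 * |a ^ 2 - b ^ 2| := by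
  set s := Real.sqrt (1 - a ^ 2) with hs_def
  set t := Real.sqrt (1 - b ^ 2) with ht_def
  have hs2 : s ^ 2 = 1 - a ^ 2 := Real.sq_sqrt (by linarith)
  have ht2 : t ^ 2 = 1 - b ^ 2 := Real.sq_sqrt (by linarith)
  have hs : 1 / 2 ≤ s := (Real.le_sqrt (by norm_num) (by linarith)).2 (by nlinarith)
  have ht : 1 / 2 ≤ t := (Real.le_sqrt (by norm_num) (by linarith)).2 (by nlinarith)
  have h1 : |s - t| * 1 ≤ |s - t| * (s + t) :=
    mul_le_mul_of_nonneg_left (by linarith) (abs_nonneg _)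
  have h2 : |s - t| * (s + t) = |s ^ 2 - t ^ 2| := by
    rw [sq_sub_sq, abs_mul, abs_of_nonneg (by linarith : (0:ℝ) ≤ s + t), mul_comm]
  have h3 : |s ^ 2 - t ^ 2| = |a ^ 2 - b ^ 2| := by
    rw [hs2, ht2, show (1 - a ^ 2) - (1 - b ^ 2) = -(a ^ 2 - b ^ 2) by ring, abs_neg]
  calc |s - t| = |s - t| * 1 := (mul_one _).symm
  _ ≤ |s - t| * (s + t) := h1
  _ = |a ^ 2 - b ^ 2| := by rw [h2, h3]
  _ ≤ 2 * |a ^ 2 - b ^ 2| := by nlinarith [abs_nonneg (a ^ 2 - b ^ 2)]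

lemma cap_lipschitz {u : E n} (hu : ‖u‖ = 1) :
    LipschitzOnWith 5 (capmap u) (Metric.closedBall 0 (Real.sqrt (3 / 4))) := by
  refine LipschitzOnWith.of_dist_le_mul fun y hy z hz => ?_
  have hy34 := capBall_sq_bound hy
  have hz34 := capBall_sq_bound hz
  set gy := Real.sqrt (1 - ‖y‖ ^ 2) with hgy
  set gz := Real.sqrt (1 - ‖z‖ ^ 2) with hgz
  have hdiff : capmap u y - capmap u z = ((y - z : hplane u) : E n) + (gy - gz) • u := by
    rw [capmap, capmap, sub_smul]
    push_cast
    abel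
  have hsq : ‖capmap u y - capmap u z‖ ^ 2 = ‖y - z‖ ^ 2 + (gy - gz) ^ 2 := by
    rw [hdiff]; exact norm_decomp hu (y - z) (gy - gz)
  have hg : |gy - gz| ≤ 2 * |‖y‖ ^ 2 - ‖z‖ ^ 2| := sqrt_lip hy34 hz34
  have hnn : |‖y‖ ^ 2 - ‖z‖ ^ 2| ≤ 2 * ‖y - z‖ := by
    have h6 : |‖y‖ - ‖z‖| ≤ ‖y - z‖ := abs_norm_sub_norm_le y z
    have h7 : |‖y‖ + ‖z‖| ≤ 2 := by
      rw [abs_of_nonneg (by positivity)]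
      have hy1 : ‖y‖ ≤ 1 := by nlinarith [norm_nonneg y]
      have hz1 : ‖z‖ ≤ 1 := by nlinarith [norm_nonneg z]
      linarith
    calc |‖y‖ ^ 2 - ‖z‖ ^ 2| = |‖y‖ + ‖z‖| * |‖y‖ - ‖z‖| := by
          rw [← abs_mul, sq_sub_sq]
    _ ≤ 2 * ‖y - z‖ := by
          apply mul_le_mul h7 h6 (abs_nonneg _) (by norm_num)
  have hgd : |gy - gz| ≤ 4 * ‖y - z‖ := by linarith
  have hfin : ‖capmap u y - capmap u z‖ ^ 2 ≤ (5 * ‖y - z‖) ^ 2 := by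
    have h8 : (gy - gz) ^ 2 ≤ (4 * ‖y - z‖) ^ 2 := by
      rw [← sq_abs (gy - gz)]
      apply pow_le_pow_left₀ (abs_nonneg _) hgd
    nlinarith [norm_nonneg (y - z)]
  rw [dist_eq_norm, dist_eq_norm]
  have := le_of_sq_le_sq' (by positivity) hfin (norm_nonneg _)
  calc ‖capmap u y - capmap u z‖ ≤ 5 * ‖y - z‖ := this
  _ = ((5 : ℝ≥0) : ℝ) * ‖y - z‖ := by norm_num

end SphereMeasure

section SphereMeasure2

variable {n : ℕ}

lemma cap_image_proj {u : E n} (hu : ‖u‖ = 1) {y : hplane u}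
    (hy : y ∈ Metric.closedBall (0 : hplane u) (Real.sqrt (3 / 4))) :
    capmap u y ∈ capSet u ∧ Submodule.orthogonalProjectionOnto (hplane u) (capmap u y) = y := by
  have hy34 := capBall_sq_bound hy
  set g := Real.sqrt (1 - ‖y‖ ^ 2) with hg_def
  have hg2 : g ^ 2 = 1 - ‖y‖ ^ 2 := Real.sq_sqrt (by linarith)
  have hg12 : 1 / 2 ≤ g := (Real.le_sqrt (by norm_num) (by linarith)).2 (by nlinarith)
  have hnorm : ‖capmap u y‖ ^ 2 = 1 := by
    rw [capmap, norm_decomp hu y g]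
    rw [hg2]; ring
  have hnorm1 : ‖capmap u y‖ = 1 := by
    have h9 : (‖capmap u y‖ - 1) * (‖capmap u y‖ + 1) = 0 := by nlinarith
    rcases mul_eq_zero.1 h9 with h | h
    · linarith
    · nlinarith [norm_nonneg (capmap u y)]
  have hinner : ⟪u, capmap u y⟫ = g := by
    rw [capmap, inner_add_right, inner_hplane, real_inner_smul_right,
      real_inner_self_eq_norm_sq, hu]
    ring
  refine ⟨⟨mem_sph.2 hnorm1, by rw [hinner]; exact hg12⟩, ?_⟩
  rw [capmap, map_add, ContinuousLinearMap.map_smul]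
  have h10 : Submodule.orthogonalProjectionOnto (hplane u) ((y : E n)) = y :=
    Submodule.orthogonalProjectionOnto_mem_subspace_eq_self y
  have h11 : Submodule.orthogonalProjectionOnto (hplane u) u = 0 :=
    Submodule.orthogonalProjectionOnto_apply_of_mem_orthogonal
      (Submodule.le_orthogonal_orthogonal (ℝ ∙ u) (Submodule.mem_span_singleton_self u))
  rw [h10, h11, smul_zero, add_zero]

lemma proj_lipschitz (u : E n) :
    LipschitzWith 1 (fun x : E n => Submodule.orthogonalProjectionOnto (hplane u) x) := by
  refine LipschitzWith.of_dist_le_mul fun x y => ?_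
  rw [dist_eq_norm, dist_eq_norm, ← map_sub]
  calc ‖Submodule.orthogonalProjectionOnto (hplane u) (x - y)‖
      ≤ ‖Submodule.orthogonalProjectionOnto (hplane u)‖ * ‖x - y‖ :=
        (Submodule.orthogonalProjectionOnto (hplane u)).le_opNorm _
  _ ≤ 1 * ‖x - y‖ :=
        mul_le_mul_of_nonneg_right (Submodule.orthogonalProjectionOnto_norm_le (hplane u)) (norm_nonneg _)
  _ = ((1 : ℝ≥0) : ℝ) * ‖x - y‖ := by norm_num

lemma hplane_finrank_cast (hn : 2 ≤ n) {u : E n} (hu : ‖u‖ = 1) :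
    ((n : ℝ) - 1) = ((Module.finrank ℝ (hplane u) : ℕ) : ℝ) := by
  haveI : Fact (Module.finrank ℝ (E n) = (n - 1) + 1) :=
    ⟨by rw [finrank_euclideanSpace_fin]; omega⟩
  have hu0 : u ≠ 0 := by
    intro h; rw [h, norm_zero] at hu; norm_num at hu
  have hfr : Module.finrank ℝ (hplane u) = n - 1 := Submodule.finrank_orthogonal_span_singleton hu0
  rw [hfr, Nat.cast_sub (by omega : 1 ≤ n), Nat.cast_one]

lemma hplane_compact_ne_top (hn : 2 ≤ n) {u : E n} (hu : ‖u‖ = 1)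
    {C : Set (hplane u)} (hC : IsCompact C) : μH[((n : ℝ) - 1)] C ≠ ⊤ := by
  rw [hplane_finrank_cast hn hu]
  haveI : BorelSpace (hplane u) := Subtype.borelSpace _
  exact hC.measure_lt_top.ne

lemma hplane_open_ne_zero (hn : 2 ≤ n) {u : E n} (hu : ‖u‖ = 1)
    {O : Set (hplane u)} (hO : IsOpen O) (hne : O.Nonempty) :
    μH[((n : ℝ) - 1)] O ≠ 0 := by
  rw [hplane_finrank_cast hn hu]
  haveI : BorelSpace (hplane u) := Subtype.borelSpace _
  exact (hO.measure_pos _ hne).ne'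

lemma dcast_nonneg (hn : 2 ≤ n) : (0 : ℝ) ≤ (n : ℝ) - 1 := by
  have : (2 : ℝ) ≤ (n : ℝ) := by exact_mod_cast hn
  linarith

lemma cap_measure_lt_top (hn : 2 ≤ n) {u : E n} (hu : ‖u‖ = 1) :
    μH[((n : ℝ) - 1)] (capSet u) < ⊤ := by
  calc μH[((n : ℝ) - 1)] (capSet u)
      ≤ μH[((n : ℝ) - 1)] (capmap u '' Metric.closedBall 0 (Real.sqrt (3 / 4))) :=
        measure_mono (cap_subset_image hu)
  _ ≤ (5 : ℝ≥0∞) ^ ((n : ℝ) - 1) * μH[((n : ℝ) - 1)] (Metric.closedBall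
        (0 : hplane u) (Real.sqrt (3 / 4))) :=
        (cap_lipschitz hu).hausdorffMeasure_image_le (dcast_nonneg hn)
  _ < ⊤ := by
        refine ENNReal.mul_lt_top ?_ ?_
        · exact ENNReal.rpow_lt_top_of_nonneg (dcast_nonneg hn) (by norm_num)
        · exact lt_top_iff_ne_top.2
            (hplane_compact_ne_top hn hu (isCompact_closedBall _ _))

lemma sph_meas_fin (hn : 2 ≤ n) : μH[((n : ℝ) - 1)] (sph n) ≠ ⊤ := by
  have hcomp : IsCompact (sph n) := isCompact_sphere 0 1
  have hcover : sph n ⊆ ⋃ x ∈ sph n, {z : E n | 1 / 2 < ⟪x, z⟫} := by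
    intro z hz
    refine Set.mem_biUnion hz ?_
    have : ⟪z, z⟫ = 1 := by
      rw [real_inner_self_eq_norm_sq, mem_sph.1 hz]; norm_num
    simp only [Set.mem_setOf_eq, this]
    norm_num
  obtain ⟨s, hssub, hsfin, hscov⟩ := hcomp.elim_finite_subcover_image
    (fun x _ => isOpen_lt continuous_const (Continuous.inner continuous_const continuous_id))
    hcover
  have hsub2 : sph n ⊆ ⋃ x ∈ hsfin.toFinset, capSet x := by
    intro z hz
    obtain ⟨x, hxs, hxz⟩ := Set.mem_iUnion₂.1 (hscov hz)
    exact Set.mem_biUnion (hsfin.mem_toFinset.2 hxs) ⟨hz, le_of_lt hxz⟩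
  have h1 : μH[((n : ℝ) - 1)] (sph n) ≤ ∑ x ∈ hsfin.toFinset, μH[((n : ℝ) - 1)] (capSet x) :=
    (measure_mono hsub2).trans (measure_biUnion_finset_le _ _)
  have h2 : ∑ x ∈ hsfin.toFinset, μH[((n : ℝ) - 1)] (capSet x) < ⊤ := by
    refine ENNReal.sum_lt_top.2 fun x hx => ?_
    exact cap_measure_lt_top hn (mem_sph.1 (hssub (hsfin.mem_toFinset.1 hx)))
  exact (lt_of_le_of_lt h1 h2).ne

lemma sph_meas_pos (hn : 2 ≤ n) : μH[((n : ℝ) - 1)] (sph n) ≠ 0 := by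
  set u : E n := EuclideanSpace.single (⟨0, by omega⟩ : Fin n) (1 : ℝ) with hu_def
  have hu : ‖u‖ = 1 := by rw [hu_def, EuclideanSpace.norm_single, norm_one]
  have hball_sub : Metric.closedBall (0 : hplane u) (Real.sqrt (3 / 4)) ⊆
      (fun x : E n => Submodule.orthogonalProjectionOnto (hplane u) x) '' capSet u := by
    intro y hy
    exact ⟨capmap u y, (cap_image_proj hu hy).1, (cap_image_proj hu hy).2⟩
  have hchain : μH[((n : ℝ) - 1)] (Metric.ball (0 : hplane u) (Real.sqrt (3 / 4))) ≤
      μH[((n : ℝ) - 1)] (sph n) := by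
    calc μH[((n : ℝ) - 1)] (Metric.ball (0 : hplane u) (Real.sqrt (3 / 4)))
        ≤ μH[((n : ℝ) - 1)] (Metric.closedBall (0 : hplane u) (Real.sqrt (3 / 4))) :=
          measure_mono Metric.ball_subset_closedBall
    _ ≤ μH[((n : ℝ) - 1)] ((fun x : E n => Submodule.orthogonalProjectionOnto (hplane u) x) '' capSet u) :=
          measure_mono hball_sub
    _ ≤ (1 : ℝ≥0∞) ^ ((n : ℝ) - 1) * μH[((n : ℝ) - 1)] (capSet u) :=
          (proj_lipschitz u).hausdorffMeasure_image_le (dcast_nonneg hn) _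
    _ = μH[((n : ℝ) - 1)] (capSet u) := by rw [ENNReal.one_rpow, one_mul]
    _ ≤ μH[((n : ℝ) - 1)] (sph n) := measure_mono fun x hx => hx.1
  have hpos : μH[((n : ℝ) - 1)] (Metric.ball (0 : hplane u) (Real.sqrt (3 / 4))) ≠ 0 := by
    refine hplane_open_ne_zero hn hu Metric.isOpen_ball ?_
    exact Metric.nonempty_ball.2 (Real.sqrt_pos.2 (by norm_num))
  intro h
  exact hpos (le_antisymm (h ▸ hchain) zero_le)

end SphereMeasure2

/-! ### Positivity of Vq, power mean, and the inclusion -/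

section MainAux

variable {n : ℕ}

lemma Vq_pos (hn : 2 ≤ n) {q : ℝ} (hq : 0 < q) {K : Set (E n)} (hK : IsBody K) :
    0 < Vq q K := by
  obtain ⟨hconv, hcomp, hint⟩ := hK
  have hKn : K ∈ 𝓝 (0 : E n) := mem_interior_iff_mem_nhds.1 hint
  obtain ⟨ε, hε, hball⟩ := Metric.mem_nhds_iff.1 hKn
  obtain ⟨R, hR⟩ := hcomp.isBounded.subset_closedBall 0
  have h0K : (0 : E n) ∈ K := mem_of_mem_nhds hKn
  have hintg := body_integrableOn hconv hcomp.isClosed hKn hR hq.le (sph_meas_fin hn)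
  have hlow : ∀ u ∈ sph n, ((ε / 2 : ℝ)) ^ q ≤ rad K u ^ q := by
    intro u hu
    have h1 : (ε / 2) • u ∈ K := by
      apply hball
      rw [Metric.mem_ball, dist_zero_right, norm_smul, mem_sph.1 hu, mul_one,
        Real.norm_eq_abs, abs_of_pos (by positivity)]
      linarith
    exact Real.rpow_le_rpow (by positivity)
      (le_rad hR (mem_sph.1 hu) (by positivity) h1) hq.le
  have h2 : ∫ _u in sph n, ((ε / 2 : ℝ)) ^ q ∂μH[((n : ℝ) - 1)] ≤
      ∫ u in sph n, rad K u ^ q ∂μH[((n : ℝ) - 1)] := by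
    refine setIntegral_mono_on ?_ hintg measurableSet_sph hlow
    exact integrableOn_const (sph_meas_fin hn)
  rw [setIntegral_const] at h2
  have h3 : 0 < (μH[((n : ℝ) - 1)] (sph n)).toReal :=
    ENNReal.toReal_pos (sph_meas_pos hn) (sph_meas_fin hn)
  have h4 : 0 < ((ε / 2 : ℝ)) ^ q := Real.rpow_pos_of_pos (by positivity) q
  have h5 : 0 < ∫ u in sph n, rad K u ^ q ∂μH[((n : ℝ) - 1)] := by
    calc (0 : ℝ) < (μH[((n : ℝ) - 1)] (sph n)).toReal • ((ε / 2 : ℝ)) ^ q := by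
          rw [smul_eq_mul]; exact mul_pos h3 h4
    _ ≤ _ := h2
  have hn0 : (0 : ℝ) < (n : ℝ) := by
    have : (2 : ℝ) ≤ (n : ℝ) := by exact_mod_cast hn
    linarith
  exact mul_pos (by positivity) h5

lemma pm_ineq {w a b p : ℝ} (hw0 : 0 ≤ w) (hw1 : w ≤ 1) (ha : 0 ≤ a) (hb : 0 ≤ b)
    (hp : 1 ≤ p) :
    (1 - w) * a + w * b ≤ ((1 - w) * a ^ p + w * b ^ p) ^ (1 / p) := by
  have h := Real.arith_mean_le_rpow_mean (Finset.univ : Finset (Fin 2)) ![1 - w, w] ![a, b]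
    (by
      intro i _
      fin_cases i
      · simpa using by linarith
      · simpa using hw0)
    (by simp [Fin.sum_univ_two])
    (by
      intro i _
      fin_cases i
      · simpa using ha
      · simpa using hb) hp
  simpa [Fin.sum_univ_two] using h

lemma IsBody_smul {K : Set (E n)} (hK : IsBody K) {c : ℝ} (hc : 0 < c) : IsBody (c • K) := by
  obtain ⟨h1, h2, h3⟩ := hK
  refine ⟨h1.smul c, ?_, ?_⟩
  · rw [← Set.image_smul]
    exact h2.image (continuous_const_smul c)
  · rw [interior_smul₀ hc.ne']
    exact ⟨0, h3, smul_zero c⟩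

lemma symm_smul {K : Set (E n)} (hsym : K = -K) (c : ℝ) : c • K = -(c • K) := by
  nth_rewrite 1 [hsym]
  rw [Set.smul_set_neg]

lemma zero_mem_smul_set' {S : Set (E n)} (h : (0 : E n) ∈ S) (c : ℝ) :
    (0 : E n) ∈ c • S := ⟨0, h, smul_zero c⟩

lemma rpow_rpow_inv' {x p : ℝ} (hx : 0 ≤ x) (hp : p ≠ 0) : (x ^ p) ^ (1 / p) = x := by
  rw [← Real.rpow_mul hx, mul_one_div, div_self hp, Real.rpow_one]

lemma smul_comb_subset {K L : Set (E n)} (hKc : IsCompact K) (hK0 : (0 : E n) ∈ K)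
    (hLc : IsCompact L) (hL0 : (0 : E n) ∈ L)
    {p lam A B D m c : ℝ} (hp : 1 ≤ p) (hA : 0 < A) (hB : 0 < B)
    (hl0 : 0 ≤ lam) (hl1 : lam ≤ 1)
    (hDdef : D = (1 - lam) * A ^ p + lam * B ^ p) (hD : 0 < D)
    (hmdef : m = lam * B ^ p / D) (hcdef : c = D ^ (1 / p)) :
    c • ((1 - m) • (A⁻¹ • K) + m • (B⁻¹ • L)) ⊆ lpComb p lam K L := by
  have hp0 : 0 < p := lt_of_lt_of_le one_pos hp
  have hm0 : 0 ≤ m := by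
    rw [hmdef]
    have := Real.rpow_nonneg hB.le p
    positivity
  have hm1 : m ≤ 1 := by
    rw [hmdef, div_le_one hD, hDdef]
    nlinarith [Real.rpow_nonneg hA.le p]
  have hc0 : 0 < c := by
    rw [hcdef]; exact Real.rpow_pos_of_pos hD _
  rintro x ⟨w, ⟨y, ⟨k1, ⟨k, hk, rfl⟩, rfl⟩, z, ⟨l1, ⟨l, hl, rfl⟩, rfl⟩, rfl⟩, rfl⟩
  intro u hu
  have ha0 : 0 ≤ supp K u := supp_nonneg hKc hK0 u
  have hb0 : 0 ≤ supp L u := supp_nonneg hLc hL0 u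
  have hka : ⟪u, k⟫ ≤ supp K u := le_supp hKc hk u
  have hlb : ⟪u, l⟫ ≤ supp L u := le_supp hLc hl u
  have hinner : ⟪u, c • ((1 - m) • (A⁻¹ • k) + m • (B⁻¹ • l))⟫ =
      c * ((1 - m) * (A⁻¹ * ⟪u, k⟫) + m * (B⁻¹ * ⟪u, l⟫)) := by
    rw [real_inner_smul_right, inner_add_right, real_inner_smul_right, real_inner_smul_right,
      real_inner_smul_right, real_inner_smul_right]
  rw [hinner]
  set a := supp K u with ha_def
  set b := supp L u with hb_def
  calc c * ((1 - m) * (A⁻¹ * ⟪u, k⟫) + m * (B⁻¹ * ⟪u, l⟫))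
      ≤ c * ((1 - m) * (A⁻¹ * a) + m * (B⁻¹ * b)) := by
        apply mul_le_mul_of_nonneg_left _ hc0.le
        have hAi : (0 : ℝ) ≤ A⁻¹ := by positivity
        have hBi : (0 : ℝ) ≤ B⁻¹ := by positivity
        apply add_le_add
        · exact mul_le_mul_of_nonneg_left (mul_le_mul_of_nonneg_left hka hAi) (by linarith)
        · exact mul_le_mul_of_nonneg_left (mul_le_mul_of_nonneg_left hlb hBi) hm0
  _ ≤ c * (((1 - m) * (A⁻¹ * a) ^ p + m * (B⁻¹ * b) ^ p) ^ (1 / p)) := by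
        apply mul_le_mul_of_nonneg_left _ hc0.le
        exact pm_ineq hm0 hm1 (by positivity) (by positivity) hp
  _ = ((1 - lam) * a ^ p + lam * b ^ p) ^ (1 / p) := by
        have hX : (0 : ℝ) ≤ (1 - m) * (A⁻¹ * a) ^ p + m * (B⁻¹ * b) ^ p := by
          apply add_nonneg
          · exact mul_nonneg (by linarith) (Real.rpow_nonneg (by positivity) p)
          · exact mul_nonneg hm0 (Real.rpow_nonneg (by positivity) p)
        rw [hcdef, ← Real.mul_rpow hD.le hX]
        congr 1
        have h1 : (A⁻¹ * a) ^ p = (A⁻¹) ^ p * a ^ p := Real.mul_rpow (by positivity) ha0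
        have h2 : (B⁻¹ * b) ^ p = (B⁻¹) ^ p * b ^ p := Real.mul_rpow (by positivity) hb0
        have h3 : A ^ p * (A⁻¹) ^ p = 1 := by
          rw [← Real.mul_rpow hA.le (by positivity), mul_inv_cancel₀ hA.ne', Real.one_rpow]
        have h4 : B ^ p * (B⁻¹) ^ p = 1 := by
          rw [← Real.mul_rpow hB.le (by positivity), mul_inv_cancel₀ hB.ne', Real.one_rpow]
        have h5 : D * m = lam * B ^ p := by
          rw [hmdef]; field_simp
        have h6 : D * (1 - m) = (1 - lam) * A ^ p := by
          rw [mul_sub, mul_one, h5, hDdef]; ring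
        calc D * ((1 - m) * (A⁻¹ * a) ^ p + m * (B⁻¹ * b) ^ p)
            = (D * (1 - m)) * ((A⁻¹) ^ p * a ^ p) + (D * m) * ((B⁻¹) ^ p * b ^ p) := by
              rw [h1, h2]; ring
        _ = (1 - lam) * (A ^ p * (A⁻¹) ^ p) * a ^ p + lam * (B ^ p * (B⁻¹) ^ p) * b ^ p := by
              rw [h5, h6]; ring
        _ = (1 - lam) * a ^ p + lam * b ^ p := by rw [h3, h4]; ring

lemma lpComb_props {K L : Set (E n)} (hK : IsBody K) (hL : IsBody L) {p lam : ℝ}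
    (hp : 1 ≤ p) (hl0 : 0 ≤ lam) (hl1 : lam ≤ 1) :
    ∃ R : ℝ, 0 < R ∧ lpComb p lam K L ⊆ Metric.closedBall 0 R ∧
      Convex ℝ (lpComb p lam K L) ∧ IsClosed (lpComb p lam K L) ∧
      lpComb p lam K L ∈ 𝓝 (0 : E n) := by
  have hp0 : 0 < p := lt_of_lt_of_le one_pos hp
  obtain ⟨RK, hRK⟩ := hK.2.1.isBounded.subset_closedBall 0
  obtain ⟨RL, hRL⟩ := hL.2.1.isBounded.subset_closedBall 0
  set R := max (max RK RL) 1 with hR_def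
  have hR : 0 < R := lt_of_lt_of_le one_pos (le_max_right _ _)
  have hKR : K ⊆ Metric.closedBall 0 R :=
    hRK.trans (Metric.closedBall_subset_closedBall ((le_max_left RK RL).trans (le_max_left _ _)))
  have hLR : L ⊆ Metric.closedBall 0 R :=
    hRL.trans (Metric.closedBall_subset_closedBall ((le_max_right RK RL).trans (le_max_left _ _)))
  have h0K : (0 : E n) ∈ K := interior_subset hK.2.2
  have h0L : (0 : E n) ∈ L := interior_subset hL.2.2
  have hf_le : ∀ u : E n, ‖u‖ = 1 →
      ((1 - lam) * supp K u ^ p + lam * supp L u ^ p) ^ (1 / p) ≤ R := by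
    intro u hu
    have haR : supp K u ≤ R := supp_le h0K hKR hu
    have hbR : supp L u ≤ R := supp_le h0L hLR hu
    have ha0 : 0 ≤ supp K u := supp_nonneg hK.2.1 h0K u
    have hb0 : 0 ≤ supp L u := supp_nonneg hL.2.1 h0L u
    have h1 : (1 - lam) * supp K u ^ p + lam * supp L u ^ p ≤ R ^ p := by
      have ha : supp K u ^ p ≤ R ^ p := Real.rpow_le_rpow ha0 haR hp0.le
      have hb : supp L u ^ p ≤ R ^ p := Real.rpow_le_rpow hb0 hbR hp0.le
      nlinarith [Real.rpow_nonneg ha0 p, Real.rpow_nonneg hb0 p]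
    calc ((1 - lam) * supp K u ^ p + lam * supp L u ^ p) ^ (1 / p)
        ≤ (R ^ p) ^ (1 / p) := by
          apply Real.rpow_le_rpow _ h1 (by positivity)
          apply add_nonneg (mul_nonneg (by linarith) (Real.rpow_nonneg ha0 p))
            (mul_nonneg hl0 (Real.rpow_nonneg hb0 p))
    _ = R := rpow_rpow_inv' hR.le hp0.ne'
  refine ⟨R, hR, wulff_subset_closedBall hR.le hf_le, wulff_convex _, wulff_closed _, ?_⟩
  obtain ⟨εK, hεK, hballK⟩ := Metric.mem_nhds_iff.1 (mem_interior_iff_mem_nhds.1 hK.2.2)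
  obtain ⟨εL, hεL, hballL⟩ := Metric.mem_nhds_iff.1 (mem_interior_iff_mem_nhds.1 hL.2.2)
  set ε := min εK εL / 2 with hε_def
  have hε : 0 < ε := by positivity
  have hf_ge : ∀ u : E n, ‖u‖ = 1 →
      ε ≤ ((1 - lam) * supp K u ^ p + lam * supp L u ^ p) ^ (1 / p) := by
    intro u hu
    have hmemK : ε • u ∈ K := by
      apply hballK
      rw [Metric.mem_ball, dist_zero_right, norm_smul, hu, mul_one, Real.norm_eq_abs,
        abs_of_pos hε]
      calc ε < min εK εL := by rw [hε_def]; linarith [lt_min hεK hεL]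
      _ ≤ εK := min_le_left _ _
    have hmemL : ε • u ∈ L := by
      apply hballL
      rw [Metric.mem_ball, dist_zero_right, norm_smul, hu, mul_one, Real.norm_eq_abs,
        abs_of_pos hε]
      calc ε < min εK εL := by rw [hε_def]; linarith [lt_min hεK hεL]
      _ ≤ εL := min_le_right _ _
    have hεK' : ε ≤ supp K u := by
      have := le_supp hK.2.1 hmemK u
      rwa [real_inner_smul_right, real_inner_self_eq_norm_sq, hu, one_pow, mul_one] at this
    have hεL' : ε ≤ supp L u := by
      have := le_supp hL.2.1 hmemL u
      rwa [real_inner_smul_right, real_inner_self_eq_norm_sq, hu, one_pow, mul_one] at this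
    have h1 : ε ^ p ≤ (1 - lam) * supp K u ^ p + lam * supp L u ^ p := by
      have ha : ε ^ p ≤ supp K u ^ p := Real.rpow_le_rpow hε.le hεK' hp0.le
      have hb : ε ^ p ≤ supp L u ^ p := Real.rpow_le_rpow hε.le hεL' hp0.le
      nlinarith
    calc ε = (ε ^ p) ^ (1 / p) := (rpow_rpow_inv' hε.le hp0.ne').symm
    _ ≤ _ := Real.rpow_le_rpow (Real.rpow_nonneg hε.le p) h1 (by positivity)
  refine Filter.mem_of_superset (Metric.ball_mem_nhds 0 hε) ?_
  intro x hx u hu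
  rw [Metric.mem_ball, dist_zero_right] at hx
  calc ⟪u, x⟫ ≤ ‖u‖ * ‖x‖ := real_inner_le_norm u x
  _ = ‖x‖ := by rw [hu, one_mul]
  _ ≤ ε := hx.le
  _ ≤ _ := hf_ge u hu

end MainAux

/-- if the (p = 1) dual Brunn–Minkowski inequality holds for all origin-symmetric
convex bodies and q ∈ (0,n], then the L_p version holds for every p ≥ 1. -/
theorem stmt8 {n : ℕ} (hn : 2 ≤ n) (q : ℝ) (hq0 : 0 < q) (hqn : q ≤ n)
    (hBM1 : ∀ K L : Set (E n), IsBody K → K = -K → IsBody L → L = -L →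
      ∀ lam ∈ Set.Icc (0:ℝ) 1,
        (1 - lam) * Vq q K ^ ((1:ℝ) / q) + lam * Vq q L ^ ((1:ℝ) / q) ≤
          Vq q ((1 - lam) • K + lam • L) ^ ((1:ℝ) / q)) :
    ∀ p : ℝ, 1 ≤ p → ∀ K L : Set (E n), IsBody K → K = -K → IsBody L → L = -L →
      ∀ lam ∈ Set.Icc (0:ℝ) 1,
        (1 - lam) * Vq q K ^ (p / q) + lam * Vq q L ^ (p / q) ≤
          Vq q (lpComb p lam K L) ^ (p / q) := by
  intro p hp K L hK hKsym hL hLsym lam hlam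
  obtain ⟨hl0, hl1⟩ := hlam
  have hp0 : 0 < p := lt_of_lt_of_le one_pos hp
  have hVK : 0 < Vq q K := Vq_pos hn hq0 hK
  have hVL : 0 < Vq q L := Vq_pos hn hq0 hL
  set A := Vq q K ^ ((1:ℝ) / q) with hA_def
  set B := Vq q L ^ ((1:ℝ) / q) with hB_def
  have hA : 0 < A := Real.rpow_pos_of_pos hVK _
  have hB : 0 < B := Real.rpow_pos_of_pos hVL _
  set D := (1 - lam) * A ^ p + lam * B ^ p with hD_def
  have hD : 0 < D := by
    rcases lt_or_ge lam 1 with h | h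
    · have h1 : 0 < (1 - lam) * A ^ p :=
        mul_pos (by linarith) (Real.rpow_pos_of_pos hA p)
      have h2 : 0 ≤ lam * B ^ p := mul_nonneg hl0 (Real.rpow_nonneg hB.le p)
      rw [hD_def]; linarith
    · have hl1' : lam = 1 := le_antisymm hl1 h
      rw [hD_def, hl1']
      have := Real.rpow_pos_of_pos hB p
      nlinarith
  set m := lam * B ^ p / D with hm_def
  set c := D ^ (1 / p) with hc_def
  have hc : 0 < c := Real.rpow_pos_of_pos hD _
  have hm0 : 0 ≤ m := by
    rw [hm_def]
    have := Real.rpow_nonneg hB.le p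
    positivity
  have hm1 : m ≤ 1 := by
    rw [hm_def, div_le_one hD, hD_def]
    nlinarith [Real.rpow_nonneg hA.le p]
  -- normalized bodies
  have hK1 : IsBody (A⁻¹ • K) := IsBody_smul hK (inv_pos.2 hA)
  have hL1 : IsBody (B⁻¹ • L) := IsBody_smul hL (inv_pos.2 hB)
  have hBMres := hBM1 (A⁻¹ • K) (B⁻¹ • L) hK1 (symm_smul hKsym A⁻¹) hL1
    (symm_smul hLsym B⁻¹) m ⟨hm0, hm1⟩
  -- normalization: Vq (A⁻¹ • K) ^ (1/q) = 1
  have hnormK : Vq q (A⁻¹ • K) ^ ((1:ℝ) / q) = 1 := by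
    rw [Vq_smul (inv_pos.2 hA)]
    rw [Real.mul_rpow (Real.rpow_nonneg (by positivity) q) hVK.le]
    rw [← Real.rpow_mul (by positivity : (0:ℝ) ≤ A⁻¹), mul_one_div, div_self hq0.ne',
      Real.rpow_one, ← hA_def]
    exact inv_mul_cancel₀ hA.ne'
  have hnormL : Vq q (B⁻¹ • L) ^ ((1:ℝ) / q) = 1 := by
    rw [Vq_smul (inv_pos.2 hB)]
    rw [Real.mul_rpow (Real.rpow_nonneg (by positivity) q) hVL.le]
    rw [← Real.rpow_mul (by positivity : (0:ℝ) ≤ B⁻¹), mul_one_div, div_self hq0.ne',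
      Real.rpow_one, ← hB_def]
    exact inv_mul_cancel₀ hB.ne'
  set N := (1 - m) • (A⁻¹ • K) + m • (B⁻¹ • L) with hN_def
  have hVN1 : 1 ≤ Vq q N ^ ((1:ℝ) / q) := by
    rw [hnormK, hnormL] at hBMres
    calc (1:ℝ) = (1 - m) * 1 + m * 1 := by ring
    _ ≤ _ := hBMres
  have hVN : 1 ≤ Vq q N := by
    have h0 : 0 ≤ Vq q N := Vq_nonneg q N
    have h1 := Real.rpow_le_rpow (by norm_num) hVN1 hq0.le
    rwa [Real.one_rpow, ← Real.rpow_mul h0, one_div, inv_mul_cancel₀ hq0.ne',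
      Real.rpow_one] at h1
  -- the L_p body
  obtain ⟨R, hR, hMR, hMconv, hMcl, hMnhds⟩ := lpComb_props hK hL hp hl0 hl1
  have hint := body_integrableOn hMconv hMcl hMnhds hMR hq0.le (sph_meas_fin hn)
  have h0K : (0 : E n) ∈ K := interior_subset hK.2.2
  have h0L : (0 : E n) ∈ L := interior_subset hL.2.2
  have hsub : c • N ⊆ lpComb p lam K L :=
    smul_comb_subset hK.2.1 h0K hL.2.1 h0L hp hA hB hl0 hl1 hD_def hD hm_def hc_def
  have h0N : (0 : E n) ∈ c • N := by
    apply zero_mem_smul_set'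
    have h1 := Set.add_mem_add (zero_mem_smul_set' (zero_mem_smul_set' h0K A⁻¹) (1 - m))
      (zero_mem_smul_set' (zero_mem_smul_set' h0L B⁻¹) m)
    simpa using h1
  have hmono : Vq q (c • N) ≤ Vq q (lpComb p lam K L) :=
    Vq_mono hq0.le hsub h0N hMR hint
  have hsmul : Vq q (c • N) = c ^ q * Vq q N := Vq_smul hc
  have hchain : c ^ q ≤ Vq q (lpComb p lam K L) := by
    calc c ^ q = c ^ q * 1 := (mul_one _).symm
    _ ≤ c ^ q * Vq q N := mul_le_mul_of_nonneg_left hVN (Real.rpow_nonneg hc.le q)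
    _ = Vq q (c • N) := hsmul.symm
    _ ≤ _ := hmono
  have hfinal : D ≤ Vq q (lpComb p lam K L) ^ (p / q) := by
    have h1 : (c ^ q) ^ (p / q) ≤ Vq q (lpComb p lam K L) ^ (p / q) :=
      Real.rpow_le_rpow (Real.rpow_nonneg hc.le q) hchain (by positivity)
    have h2 : (c ^ q) ^ (p / q) = D := by
      rw [hc_def, ← Real.rpow_mul hD.le, ← Real.rpow_mul hD.le]
      rw [show 1 / p * q * (p / q) = 1 by field_simp, Real.rpow_one]
    rwa [h2] at h1
  have hgoalL : (1 - lam) * Vq q K ^ (p / q) + lam * Vq q L ^ (p / q) = D := by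
    rw [hD_def, hA_def, hB_def]
    rw [← Real.rpow_mul hVK.le, ← Real.rpow_mul hVL.le]
    rw [show (1:ℝ) / q * p = p / q by ring]
  rw [hgoalL]
  exact hfinal
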